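/- Given kₙ > 0 for each n and p_g > 0, the Stackelberg game has a unique equilibrium: there is a unique price p* > 0 minimizing C(p) = A + N·p + p_g·(Σₙ kₙ)/p, and given p*, each RU has a unique optimal consumption eₙ* = kₙ/p* − 1; at this pair, no player can improve by unilateral deviation. -/

import Mathlib

lemma ru_strict (kn p e : ℝ) (hk : 0 < kn) (hp : 0 < p) (he : -1 < e)
    (hne : e ≠ kn / p - 1) :
    kn * Real.log (1 + e) - p * e < kn * Real.log (1 + (kn / p - 1)) - p * (kn / p - 1) := by
  have h1e : 0 < 1 + e := by linarith
  have ht : 0 < (1 + e) * p / kn := by positivity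
  have hlt : Real.log ((1 + e) * p / kn) < (1 + e) * p / kn - 1 := by
    apply Real.log_lt_sub_one_of_pos ht
    intro h
    apply hne
    field_simp at h
    field_simp
    linarith
  have hlog : Real.log ((1 + e) * p / kn) = Real.log (1 + e) + Real.log p - Real.log kn := by
    rw [Real.log_div (by positivity) (ne_of_gt hk), Real.log_mul (ne_of_gt h1e) (ne_of_gt hp)]
  have h2 : (1 : ℝ) + (kn / p - 1) = kn / p := by ring
  have hlog2 : Real.log (1 + (kn / p - 1)) = Real.log kn - Real.log p := by
    rw [h2, Real.log_div (ne_of_gt hk) (ne_of_gt hp)]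
  rw [hlog] at hlt
  have hmul := mul_lt_mul_of_pos_left hlt hk
  have hfe : kn * ((1 + e) * p / kn - 1) = (1 + e) * p - kn := by field_simp
  have hpk : p * (kn / p - 1) = kn - p := by field_simp
  rw [hfe] at hmul
  rw [hlog2, hpk]
  nlinarith

lemma leader_key (Nr pg K A q pstar : ℝ) (hN : 0 < Nr) (hq : 0 < q)
    (hps : 0 < pstar) (hsq : pstar ^ 2 = pg * K / Nr) :
    (A + Nr * q + pg * K / q) - (A + Nr * pstar + pg * K / pstar)
      = Nr * (q - pstar) ^ 2 / q := by
  have hpk : pg * K = Nr * pstar ^ 2 := by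
    rw [hsq]; field_simp
  rw [hpk]
  field_simp
  ring

/-- Unique Stackelberg equilibrium: there is a unique price `p* > 0` minimizing
`C(p) = A + N·p + p_g·K/p`, and given `p*` each RU has a unique optimal
consumption `eₙ* = kₙ/p* − 1`; at this pair no player can improve by a
unilateral deviation. -/
theorem stackelberg_equilibrium_exists_unique (N : ℕ) (hN : 1 ≤ N)
    (E k : Fin N → ℝ) (A pg : ℝ) (hk : ∀ n, 0 < k n) (hpg : 0 < pg) :
    letI K : ℝ := ∑ n, k n
    letI C : ℝ → ℝ := fun p => A + N * p + pg * K / p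
    letI U : Fin N → ℝ → ℝ → ℝ :=
      fun n e p => k n * Real.log (1 + e) + p * (E n - e)
    (∃! p : ℝ, p ∈ Set.Ioi (0 : ℝ) ∧ ∀ q ∈ Set.Ioi (0 : ℝ), C p ≤ C q) ∧
    (∀ p ∈ Set.Ioi (0 : ℝ), (∀ q ∈ Set.Ioi (0 : ℝ), C p ≤ C q) →
      ∀ n, (k n / p - 1 ∈ Set.Ioi (-1 : ℝ) ∧
              ∀ e ∈ Set.Ioi (-1 : ℝ), U n e p ≤ U n (k n / p - 1) p) ∧
           ∀ e ∈ Set.Ioi (-1 : ℝ),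
             (∀ e' ∈ Set.Ioi (-1 : ℝ), U n e' p ≤ U n e p) → e = k n / p - 1) := by
  have hNr : (0 : ℝ) < N := by exact_mod_cast Nat.lt_of_lt_of_le Nat.zero_lt_one hN
  have hK : (0 : ℝ) < ∑ n, k n := by
    apply Finset.sum_pos (fun n _ => hk n)
    simp [Finset.univ_nonempty_iff]
    exact Fin.pos_iff_nonempty.mp (Nat.lt_of_lt_of_le Nat.zero_lt_one hN)
  constructor
  · -- leader part
    set pstar : ℝ := Real.sqrt (pg * (∑ n, k n) / N) with hps_def
    have hpos : 0 < pg * (∑ n, k n) / N := by positivity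
    have hps : 0 < pstar := Real.sqrt_pos.mpr hpos
    have hsq : pstar ^ 2 = pg * (∑ n, k n) / N := Real.sq_sqrt hpos.le
    refine ⟨pstar, ⟨hps, fun q hq => ?_⟩, ?_⟩
    · have := leader_key N pg (∑ n, k n) A q pstar hNr hq hps hsq
      nlinarith [sq_nonneg (q - pstar), div_nonneg (mul_nonneg hNr.le (sq_nonneg (q - pstar))) (le_of_lt hq)]
    · rintro p ⟨hp, hmin⟩
      by_contra hne
      have hkey := leader_key N pg (∑ n, k n) A p pstar hNr hp hps hsq
      have hstrict : (0:ℝ) < N * (p - pstar) ^ 2 / p := by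
        apply div_pos _ hp
        apply mul_pos hNr
        have : p - pstar ≠ 0 := sub_ne_zero.mpr hne
        positivity
      have := hmin pstar hps
      simp only [Set.mem_Ioi] at *
      linarith
  · -- follower part
    intro p hp hmin n
    have hpp : (0:ℝ) < p := hp
    have hub : ∀ e ∈ Set.Ioi (-1 : ℝ),
        k n * Real.log (1 + e) + p * (E n - e)
          ≤ k n * Real.log (1 + (k n / p - 1)) + p * (E n - (k n / p - 1)) := by
      intro e he
      rcases eq_or_ne e (k n / p - 1) with rfl | hne
      · exact le_rfl
      · have := ru_strict (k n) p e (hk n) hpp he hne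
        nlinarith
    refine ⟨⟨?_, fun e he => hub e he⟩, ?_⟩
    · have : 0 < k n / p := div_pos (hk n) hpp
      simp only [Set.mem_Ioi]; linarith
    · intro e he hopt
      by_contra hne
      have h1 := hopt (k n / p - 1) (by
        have : 0 < k n / p := div_pos (hk n) hpp
        simp only [Set.mem_Ioi]; linarith)
      have h2 := ru_strict (k n) p e (hk n) hpp he hne
      simp only at h1
      nlinarith
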